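/- Let p_1 = 2, p_2 = 3, ..., p_m denote the first m primes, set M_m = p_1 ⋯ p_m and R_m = (p_1 - 1) ⋯ (p_m - 1). Let H be an admissible set of natural numbers with cardinality k_0 ≥ 1, and let a be a natural number with a·R_m < k_0. Then the diameter of H is at least a·M_m; in particular, the diameter of H is at least M_m·(k_0/R_m - 1), i.e., (max H - min H)·R_m ≥ M_m·(k_0 - R_m). -/

import Mathlib

def IsAdmissible (H : Finset ℕ) : Prop :=
  ∀ p : ℕ, p.Prime → (H.image (fun n => n % p)).card < p

private lemma modcard_mul (H : Finset ℕ) {M p : ℕ} (hM : 0 < M) (hp : 0 < p)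
    (hcop : Nat.Coprime M p) :
    (H.image (fun n => n % (M * p))).card ≤
      (H.image (fun n => n % M)).card * (H.image (fun n => n % p)).card := by
  rw [← Finset.card_product]
  apply Finset.card_le_card_of_injOn (fun r => (r % M, r % p))
  · intro r hr
    simp only [Finset.mem_coe, Finset.mem_image] at hr
    obtain ⟨h, hh, rfl⟩ := hr
    simp only [Finset.mem_coe, Finset.mem_product, Finset.mem_image]
    refine ⟨⟨h, hh, ?_⟩, ⟨h, hh, ?_⟩⟩
    · exact (Nat.mod_mod_of_dvd h ⟨p, rfl⟩).symm
    · exact (Nat.mod_mod_of_dvd h ⟨M, mul_comm M p⟩).symm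
  · intro r hr r' hr' hrr
    simp only [Finset.mem_coe, Finset.mem_image] at hr hr'
    obtain ⟨h, _, rfl⟩ := hr
    obtain ⟨h', _, rfl⟩ := hr'
    have h1 : (0:ℕ) < M * p := Nat.mul_pos hM hp
    simp only [Prod.mk.injEq] at hrr
    have e1 : h % (M*p) ≡ h' % (M*p) [MOD M] := hrr.1
    have e2 : h % (M*p) ≡ h' % (M*p) [MOD p] := hrr.2
    have := (Nat.modEq_and_modEq_iff_modEq_mul hcop).mp ⟨e1, e2⟩
    have l1 : h % (M*p) < M*p := Nat.mod_lt _ h1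
    have l2 : h' % (M*p) < M*p := Nat.mod_lt _ h1
    have := Nat.ModEq.eq_of_lt_of_lt this l1 l2
    exact this

private lemma modcard_prod (H : Finset ℕ) (hH : IsAdmissible H) (m : ℕ) :
    (H.image (fun n => n % ∏ i ∈ Finset.range m, Nat.nth Nat.Prime i)).card ≤
      ∏ i ∈ Finset.range m, (Nat.nth Nat.Prime i - 1) := by
  induction m with
  | zero =>
    simp only [Finset.range_zero, Finset.prod_empty]
    have : H.image (fun n => n % 1) ⊆ {0} := by
      intro x hx
      simp only [Finset.mem_image, Nat.mod_one] at hx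
      simp [hx.choose_spec.2.symm]
    calc (H.image (fun n => n % 1)).card ≤ ({0} : Finset ℕ).card := Finset.card_le_card this
      _ = 1 := rfl
  | succ m ih =>
    rw [Finset.prod_range_succ, Finset.prod_range_succ]
    set M := ∏ i ∈ Finset.range m, Nat.nth Nat.Prime i with hMdef
    set p := Nat.nth Nat.Prime m with hpdef
    have hpprime : p.Prime := Nat.prime_nth_prime m
    have hM : 0 < M := Finset.prod_pos (fun i _ => (Nat.prime_nth_prime i).pos)
    have hcop : Nat.Coprime M p := by
      apply Nat.Coprime.prod_left
      intro i hi
      have hlt : Nat.nth Nat.Prime i < p :=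
        (Nat.nth_lt_nth Nat.infinite_setOf_prime).mpr (Finset.mem_range.mp hi)
      exact (Nat.coprime_primes (Nat.prime_nth_prime i) hpprime).mpr hlt.ne
    calc (H.image (fun n => n % (M * p))).card
        ≤ (H.image (fun n => n % M)).card * (H.image (fun n => n % p)).card :=
          modcard_mul H hM hpprime.pos hcop
      _ ≤ (∏ i ∈ Finset.range m, (Nat.nth Nat.Prime i - 1)) * (p - 1) := by
          apply Nat.mul_le_mul ih
          have := hH p hpprime
          omega

private lemma card_le_interval (H : Finset ℕ) (hne : H.Nonempty) {M a : ℕ} (hM : 0 < M)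
    (hD : H.max' hne - H.min' hne < a * M) :
    H.card ≤ a * (H.image (fun n => n % M)).card := by
  rw [← Finset.card_range a, ← Finset.card_product]
  apply Finset.card_le_card_of_injOn (fun h => ((h - H.min' hne) / M, h % M))
  · intro h hh
    simp only [Finset.mem_coe, Finset.mem_product, Finset.mem_range, Finset.mem_image]
    constructor
    · have h1 : h ≤ H.max' hne := Finset.le_max' H h hh
      have h2 : H.min' hne ≤ h := Finset.min'_le H h hh
      have h4 : M * a = a * M := mul_comm M a
      have h3 : h - H.min' hne < M * a := by omega
      exact Nat.div_lt_of_lt_mul h3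
    · exact ⟨h, hh, rfl⟩
  · intro h hh h' hh' heq
    simp only [Prod.mk.injEq] at heq
    have hm : H.min' hne ≤ h := Finset.min'_le H h (Finset.mem_coe.mp hh)
    have hm' : H.min' hne ≤ h' := Finset.min'_le H h' (Finset.mem_coe.mp hh')
    rcases le_total h h' with hle | hle
    · have hdvd : M ∣ h' - h := (Nat.modEq_iff_dvd' hle).mp heq.2
      have hq := heq.1
      have e1 := Nat.div_add_mod (h - H.min' hne) M
      have e2 := Nat.div_add_mod (h' - H.min' hne) M
      have l1 : (h - H.min' hne) % M < M := Nat.mod_lt _ hM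
      have l2 : (h' - H.min' hne) % M < M := Nat.mod_lt _ hM
      obtain ⟨c, hc⟩ := hdvd
      rcases c with _ | c
      · omega
      · exfalso
        rw [hq] at e1
        have hMle : M ≤ M * (c + 1) := Nat.le_mul_of_pos_right M (Nat.succ_pos c)
        omega
    · have hdvd : M ∣ h - h' := (Nat.modEq_iff_dvd' hle).mp heq.2.symm
      have hq := heq.1
      have e1 := Nat.div_add_mod (h - H.min' hne) M
      have e2 := Nat.div_add_mod (h' - H.min' hne) M
      have l1 : (h - H.min' hne) % M < M := Nat.mod_lt _ hM
      have l2 : (h' - H.min' hne) % M < M := Nat.mod_lt _ hM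
      obtain ⟨c, hc⟩ := hdvd
      rcases c with _ | c
      · omega
      · exfalso
        rw [hq] at e1
        have hMle : M ≤ M * (c + 1) := Nat.le_mul_of_pos_right M (Nat.succ_pos c)
        omega

/-- `Nat.nth Nat.Prime i` for `i ∈ range m` runs over the first `m` primes. -/
theorem admissible_diameter_primorial_bound (H : Finset ℕ) (hne : H.Nonempty)
    (m k₀ : ℕ) (hk₀ : 1 ≤ k₀) (hcard : H.card = k₀) (hH : IsAdmissible H) :
    (∀ a : ℕ, a * (∏ i ∈ Finset.range m, (Nat.nth Nat.Prime i - 1)) < k₀ →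
      a * (∏ i ∈ Finset.range m, Nat.nth Nat.Prime i) ≤ H.max' hne - H.min' hne) ∧
    (H.max' hne - H.min' hne) * (∏ i ∈ Finset.range m, (Nat.nth Nat.Prime i - 1)) ≥
      (∏ i ∈ Finset.range m, Nat.nth Nat.Prime i) *
        (k₀ - ∏ i ∈ Finset.range m, (Nat.nth Nat.Prime i - 1)) := by
  set M := ∏ i ∈ Finset.range m, Nat.nth Nat.Prime i with hMdef
  set R := ∏ i ∈ Finset.range m, (Nat.nth Nat.Prime i - 1) with hRdef
  have hM : 0 < M := Finset.prod_pos (fun i _ => (Nat.prime_nth_prime i).pos)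
  have hR : 0 < R := Finset.prod_pos (fun i _ => by
    have := (Nat.prime_nth_prime i).two_le; omega)
  have main : ∀ a : ℕ, a * R < k₀ → a * M ≤ H.max' hne - H.min' hne := by
    intro a ha
    by_contra hcon
    push_neg at hcon
    have h1 : H.card ≤ a * (H.image (fun n => n % M)).card :=
      card_le_interval H hne hM (by omega)
    have h2 := modcard_prod H hH m
    have : k₀ ≤ a * R := by
      calc k₀ = H.card := hcard.symm
        _ ≤ a * (H.image (fun n => n % M)).card := h1
        _ ≤ a * R := Nat.mul_le_mul_left a h2
    omega
  refine ⟨main, ?_⟩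
  by_cases hk : k₀ ≤ R
  · have : k₀ - R = 0 := by omega
    simp [this]
  · push_neg at hk
    set a := (k₀ - 1) / R with hadef
    have ha1 : a * R < k₀ := by
      rw [hadef]
      have := Nat.div_mul_le_self (k₀ - 1) R
      omega
    have ha2 : k₀ - R ≤ a * R := by
      rw [hadef]
      have h1 := Nat.div_add_mod (k₀ - 1) R
      have h2 : (k₀ - 1) % R < R := Nat.mod_lt _ hR
      have h3 : R * ((k₀ - 1) / R) = ((k₀ - 1) / R) * R := mul_comm _ _
      omega
    have hD := main a ha1
    calc M * (k₀ - R) ≤ M * (a * R) := Nat.mul_le_mul_left M ha2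
      _ = (a * M) * R := by ring
      _ ≤ (H.max' hne - H.min' hne) * R := Nat.mul_le_mul_right R hD
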